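/- Let s ∈ (0,1), Δt > 0, let N be a positive integer, set T := NΔt and t_j := jΔt, and let ρ : [0,T] → ℝ. Let I[ρ] be the piecewise-linear interpolant of ρ on the uniform grid, I[ρ](t) = ((t_{j+1}−t)/Δt)·ρ(t_j) + ((t−t_j)/Δt)·ρ(t_{j+1}) for t ∈ [t_j, t_{j+1}), j = 0,…,N−1. Then ∫_0^T I[ρ](t) t^{s−1} dt = Σ_{j=0}^{N} ρ(t_j)·β_j, where β_0 = Δt^s/(s(1+s)), β_j = (Δt^s/(s(1+s)))·((j+1)^{1+s} − 2j^{1+s} + (j−1)^{1+s}) for 1 ≤ j ≤ N−1, and β_N = (Δt^s/(s(1+s)))·((N−1)^{1+s} + (1+s)·N^s − N^{1+s}). -/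

import Mathlib

open Real MeasureTheory intervalIntegral

/-- The piecewise-linear interpolant of `ρ` on the uniform grid `t_j = jΔt`:
`I[ρ](t) = ((t_{j+1}−t)/Δt)·ρ(t_j) + ((t−t_j)/Δt)·ρ(t_{j+1})` for `t ∈ [t_j, t_{j+1})`. -/
noncomputable def plInterp (Δt : ℝ) (ρ : ℝ → ℝ) (t : ℝ) : ℝ :=
  ((((⌊t / Δt⌋₊ : ℝ) + 1) * Δt - t) / Δt) * ρ ((⌊t / Δt⌋₊ : ℝ) * Δt) +
    ((t - (⌊t / Δt⌋₊ : ℝ) * Δt) / Δt) * ρ (((⌊t / Δt⌋₊ : ℝ) + 1) * Δt)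

/-- The quadrature weights of the piecewise-linear rule:
`β_0 = Δt^s/(s(1+s))`,
`β_j = (Δt^s/(s(1+s)))((j+1)^{1+s} − 2j^{1+s} + (j−1)^{1+s})` for `1 ≤ j ≤ N−1`, and
`β_N = (Δt^s/(s(1+s)))((N−1)^{1+s} + (1+s)N^s − N^{1+s})`. -/
noncomputable def plWeight (s Δt : ℝ) (N j : ℕ) : ℝ :=
  if j = 0 then Δt ^ s / (s * (1 + s))
  else if j < N then
    Δt ^ s / (s * (1 + s)) *
      (((j:ℝ) + 1) ^ (1 + s) - 2 * (j:ℝ) ^ (1 + s) + ((j:ℝ) - 1) ^ (1 + s))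
  else
    Δt ^ s / (s * (1 + s)) *
      (((N:ℝ) - 1) ^ (1 + s) + (1 + s) * (N:ℝ) ^ s - (N:ℝ) ^ (1 + s))

noncomputable def plA (s Δt J : ℝ) : ℝ :=
  Δt ^ s * ((J + 1) * ((J + 1) ^ s - J ^ s) / s - ((J + 1) * (J + 1) ^ s - J * J ^ s) / (1 + s))

noncomputable def plB (s Δt J : ℝ) : ℝ :=
  Δt ^ s * (((J + 1) * (J + 1) ^ s - J * J ^ s) / (1 + s) - J * ((J + 1) ^ s - J ^ s) / s)

lemma plInterp_ae {s Δt : ℝ} (hΔt : 0 < Δt) (ρ : ℝ → ℝ) (j : ℕ) :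
    ∀ᵐ t ∂(volume : Measure ℝ), t ∈ Set.uIoc ((j:ℝ)*Δt) (((j:ℝ)+1)*Δt) →
      plInterp Δt ρ t * t ^ (s-1)
        = (((j:ℝ)+1) * ρ ((j:ℝ)*Δt) - (j:ℝ) * ρ (((j:ℝ)+1)*Δt)) * t ^ (s-1)
          + ((ρ (((j:ℝ)+1)*Δt) - ρ ((j:ℝ)*Δt)) / Δt) * t ^ s := by
  have hb : ∀ᵐ t : ℝ, t ≠ ((j:ℝ)+1)*Δt := by simp [ae_iff, measure_singleton]
  filter_upwards [hb] with t htb hmem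
  have hjnn : (0:ℝ) ≤ (j:ℝ) * Δt := by positivity
  have hlt : (j:ℝ)*Δt < ((j:ℝ)+1)*Δt := by nlinarith
  rw [Set.uIoc_of_le hlt.le] at hmem
  have ht1 : (j:ℝ)*Δt < t := hmem.1
  have ht2 : t < ((j:ℝ)+1)*Δt := lt_of_le_of_ne hmem.2 htb
  have ht0 : 0 < t := lt_of_le_of_lt hjnn ht1
  have hfloor : ⌊t / Δt⌋₊ = j := by
    rw [Nat.floor_eq_iff (by positivity : 0 ≤ t/Δt)]
    constructor
    · exact le_of_lt ((lt_div_iff₀ hΔt).2 ht1)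
    · rw [div_lt_iff₀ hΔt]; push_cast; linarith
  have hts : t ^ s = t ^ (s-1) * t := by
    conv_lhs => rw [show s = s - 1 + 1 by ring]
    rw [Real.rpow_add_one ht0.ne']
  rw [plInterp, hfloor, hts]
  field_simp
  ring

lemma stmt16_intble {s Δt : ℝ} (hs : s ∈ Set.Ioo (0:ℝ) 1) (hΔt : 0 < Δt) (ρ : ℝ → ℝ) (j : ℕ) :
    IntervalIntegrable (fun t => plInterp Δt ρ t * t ^ (s-1)) volume
      ((j:ℝ)*Δt) (((j:ℝ)+1)*Δt) := by
  have hg : IntervalIntegrable (fun t : ℝ =>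
      (((j:ℝ)+1) * ρ ((j:ℝ)*Δt) - (j:ℝ) * ρ (((j:ℝ)+1)*Δt)) * t ^ (s-1)
        + ((ρ (((j:ℝ)+1)*Δt) - ρ ((j:ℝ)*Δt)) / Δt) * t ^ s) volume
      ((j:ℝ)*Δt) (((j:ℝ)+1)*Δt) := by
    exact ((intervalIntegrable_rpow' (by linarith [hs.1] : (-1:ℝ) < s - 1)).const_mul _).add
      ((intervalIntegrable_rpow' (by linarith [hs.1] : (-1:ℝ) < s)).const_mul _)
  refine hg.congr_ae ?_
  rw [Filter.EventuallyEq, ae_restrict_iff' measurableSet_uIoc]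
  filter_upwards [plInterp_ae hΔt ρ j] with t h ht
  exact (h ht).symm

lemma stmt16_piece {s Δt : ℝ} (hs : s ∈ Set.Ioo (0:ℝ) 1) (hΔt : 0 < Δt) (ρ : ℝ → ℝ) (j : ℕ) :
    ∫ t in ((j:ℝ)*Δt)..(((j:ℝ)+1)*Δt), plInterp Δt ρ t * t ^ (s-1)
      = ρ ((j:ℝ)*Δt) * plA s Δt (j:ℝ) + ρ (((j:ℝ)+1)*Δt) * plB s Δt (j:ℝ) := by
  obtain ⟨hs0, hs1⟩ := hs
  rw [intervalIntegral.integral_congr_ae (plInterp_ae hΔt ρ j)]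
  rw [intervalIntegral.integral_add
      ((intervalIntegrable_rpow' (by linarith : (-1:ℝ) < s - 1)).const_mul _)
      ((intervalIntegrable_rpow' (by linarith : (-1:ℝ) < s)).const_mul _),
    intervalIntegral.integral_const_mul, intervalIntegral.integral_const_mul,
    integral_rpow (Or.inl (by linarith : (-1:ℝ) < s - 1)),
    integral_rpow (Or.inl (by linarith : (-1:ℝ) < s))]
  have hJ : (0:ℝ) ≤ (j:ℝ) := j.cast_nonneg
  have hJ1 : (0:ℝ) ≤ (j:ℝ) + 1 := by linarith
  have e1 : s - 1 + 1 = s := by ring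
  rw [e1]
  rw [Real.mul_rpow hJ hΔt.le, Real.mul_rpow hJ1 hΔt.le,
    Real.rpow_add' (by positivity) (by linarith : s + 1 ≠ 0),
    Real.rpow_add' (by positivity) (by linarith : s + 1 ≠ 0),
    Real.mul_rpow hJ hΔt.le, Real.mul_rpow hJ1 hΔt.le, Real.rpow_one, Real.rpow_one]
  rw [plA, plB]
  field_simp
  ring

lemma stmt16_w0 {s Δt : ℝ} (hs : s ∈ Set.Ioo (0:ℝ) 1) (hΔt : 0 < Δt) :
    plA s Δt 0 = Δt ^ s / (s * (1 + s)) := by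
  obtain ⟨hs0, hs1⟩ := hs
  rw [plA, Real.zero_rpow hs0.ne', zero_add, Real.one_rpow]
  field_simp
  ring

lemma stmt16_wmid {s Δt J : ℝ} (hs : s ∈ Set.Ioo (0:ℝ) 1) (hΔt : 0 < Δt) (hJ : 1 ≤ J) :
    plA s Δt J + plB s Δt (J - 1)
      = Δt ^ s / (s * (1 + s)) * ((J + 1) ^ (1 + s) - 2 * J ^ (1 + s) + (J - 1) ^ (1 + s)) := by
  obtain ⟨hs0, hs1⟩ := hs
  have h1s : (1:ℝ) + s ≠ 0 := by linarith
  rw [plA, plB, show J - 1 + 1 = J from by ring,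
    Real.rpow_add' (by linarith : (0:ℝ) ≤ J + 1) h1s,
    Real.rpow_add' (by linarith : (0:ℝ) ≤ J) h1s,
    Real.rpow_add' (by linarith : (0:ℝ) ≤ J - 1) h1s,
    Real.rpow_one, Real.rpow_one, Real.rpow_one]
  field_simp
  ring

lemma stmt16_wlast {s Δt M : ℝ} (hs : s ∈ Set.Ioo (0:ℝ) 1) (hΔt : 0 < Δt) (hM : 1 ≤ M) :
    plB s Δt (M - 1)
      = Δt ^ s / (s * (1 + s)) * ((M - 1) ^ (1 + s) + (1 + s) * M ^ s - M ^ (1 + s)) := by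
  obtain ⟨hs0, hs1⟩ := hs
  have h1s : (1:ℝ) + s ≠ 0 := by linarith
  rw [plB, show M - 1 + 1 = M from by ring,
    Real.rpow_add' (by linarith : (0:ℝ) ≤ M - 1) h1s,
    Real.rpow_add' (by linarith : (0:ℝ) ≤ M) h1s,
    Real.rpow_one, Real.rpow_one]
  field_simp
  ring

/-- Let `s ∈ (0,1)`, `Δt > 0`, `N ≥ 1`, `T = NΔt`, and `ρ : ℝ → ℝ`. Then
the integral of the piecewise-linear interpolant of `ρ` against `t^{s−1} dt` on `(0,T)`
equals the quadrature sum `Σ_{j=0}^N ρ(t_j) β_j`. -/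
theorem stmt16 (s Δt : ℝ) (hs : s ∈ Set.Ioo (0:ℝ) 1) (hΔt : 0 < Δt) (N : ℕ) (hN : 0 < N)
    (ρ : ℝ → ℝ) :
    ∫ t in (0:ℝ)..((N:ℝ) * Δt), plInterp Δt ρ t * t ^ (s - 1)
      = ∑ j ∈ Finset.range (N + 1), ρ ((j:ℝ) * Δt) * plWeight s Δt N j := by
  have hsplit :
      ∑ j ∈ Finset.range N,
          ∫ t in ((fun k : ℕ => (k:ℝ)*Δt) j)..((fun k : ℕ => (k:ℝ)*Δt) (j+1)),
            plInterp Δt ρ t * t ^ (s-1)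
        = ∫ t in ((fun k : ℕ => (k:ℝ)*Δt) 0)..((fun k : ℕ => (k:ℝ)*Δt) N),
            plInterp Δt ρ t * t ^ (s-1) :=
    intervalIntegral.sum_integral_adjacent_intervals
      (fun k _ => by
        have := stmt16_intble hs hΔt ρ k
        simp only [Nat.cast_add, Nat.cast_one]
        exact this)
  simp only [Nat.cast_zero, zero_mul] at hsplit
  rw [← hsplit]
  have hpieces : ∀ j ∈ Finset.range N,
      (∫ t in (((j:ℕ):ℝ)*Δt)..((((j+1):ℕ):ℝ)*Δt), plInterp Δt ρ t * t ^ (s-1))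
        = ρ ((j:ℝ)*Δt) * plA s Δt (j:ℝ) + ρ (((j:ℝ)+1)*Δt) * plB s Δt (j:ℝ) := by
    intro j _
    have := stmt16_piece hs hΔt ρ j
    simp only [Nat.cast_add, Nat.cast_one]
    exact this
  rw [Finset.sum_congr rfl hpieces, Finset.sum_add_distrib]
  have hA : ∑ j ∈ Finset.range N, ρ ((j:ℝ)*Δt) * plA s Δt (j:ℝ)
      = ∑ j ∈ Finset.range (N+1),
          ρ ((j:ℝ)*Δt) * (if j < N then plA s Δt (j:ℝ) else 0) := by
    rw [Finset.sum_range_succ, if_neg (lt_irrefl N), mul_zero, add_zero]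
    exact Finset.sum_congr rfl fun j hj => by rw [if_pos (Finset.mem_range.1 hj)]
  have hB : ∑ j ∈ Finset.range N, ρ (((j:ℝ)+1)*Δt) * plB s Δt (j:ℝ)
      = ∑ j ∈ Finset.range (N+1),
          ρ ((j:ℝ)*Δt) * (if j = 0 then 0 else plB s Δt ((j:ℝ)-1)) := by
    rw [Finset.sum_range_succ']
    simp [Nat.succ_ne_zero, add_sub_cancel_right]
  rw [hA, hB, ← Finset.sum_add_distrib]
  refine Finset.sum_congr rfl fun j hj => ?_
  rw [← mul_add]
  congr 1
  rcases Nat.eq_zero_or_pos j with h0 | hpos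
  · subst h0
    rw [if_pos hN, if_pos rfl, add_zero, Nat.cast_zero, stmt16_w0 hs hΔt, plWeight, if_pos rfl]
  · have hj1 : (1:ℝ) ≤ (j:ℝ) := by exact_mod_cast hpos
    rcases lt_or_ge j N with hjN | hjN
    · rw [if_pos hjN, if_neg hpos.ne', stmt16_wmid hs hΔt hj1, plWeight,
        if_neg hpos.ne', if_pos hjN]
    · have hjN' : j = N := le_antisymm (Nat.lt_succ_iff.1 (Finset.mem_range.1 hj)) hjN
      subst hjN'
      have hN1 : (1:ℝ) ≤ (j:ℝ) := hj1
      rw [if_neg (lt_irrefl j), if_neg hpos.ne', zero_add, stmt16_wlast hs hΔt hN1, plWeight,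
        if_neg hpos.ne', if_neg (lt_irrefl j)]
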